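/- Let X_1,…,X_n be drawn from a product distribution on 𝒳^n and let M be a k-pass streaming algorithm with private randomness. Then for all j ∈ [n] and all i ∈ [k]: I(X_{[1,j]}, M_{(≤i,[0,j-1])}; X_{[j+1,n]}, M_{(≤i,[j+1,n])} | M_{<i}, M_{(≤i,j)}) = 0. -/
import Mathlib


open scoped Classical
open Finset

noncomputable section

namespace MultiPassIC

/-- Probability of an event under a probability mass function `p` on a finite sample space. -/
def pr {Ω : Type} [Fintype Ω] (p : Ω → ℝ) (E : Ω → Prop) : ℝ :=
  ∑ ω, if E ω then p ω else 0

/-- `p` is a probability mass function on the finite type `Ω`. -/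
structure IsPMF {Ω : Type} [Fintype Ω] (p : Ω → ℝ) : Prop where
  nonneg : ∀ ω, 0 ≤ p ω
  sum_one : ∑ ω, p ω = 1

/-- Shannon entropy (base 2) of the random variable `A` under `p`. -/
def H {Ω : Type} [Fintype Ω] {α : Type} [Fintype α] (p : Ω → ℝ) (A : Ω → α) : ℝ :=
  -∑ a, pr p (fun ω => A ω = a) * Real.logb 2 (pr p (fun ω => A ω = a))

/-- Conditional mutual information `I(A ; B ∣ C)` (base 2), with the usual conventions
for vanishing probabilities. -/
def condMI {Ω : Type} [Fintype Ω] {α β γ : Type} [Fintype α] [Fintype β] [Fintype γ]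
    (p : Ω → ℝ) (A : Ω → α) (B : Ω → β) (C : Ω → γ) : ℝ :=
  ∑ a, ∑ b, ∑ c,
    pr p (fun ω => A ω = a ∧ B ω = b ∧ C ω = c) *
      Real.logb 2 ((pr p (fun ω => C ω = c) *
          pr p (fun ω => A ω = a ∧ B ω = b ∧ C ω = c)) /
        (pr p (fun ω => A ω = a ∧ C ω = c) * pr p (fun ω => B ω = b ∧ C ω = c)))

/-- Mutual information `I(A ; B)` (base 2). -/
def MI {Ω : Type} [Fintype Ω] {α β : Type} [Fintype α] [Fintype β]
    (p : Ω → ℝ) (A : Ω → α) (B : Ω → β) : ℝ :=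
  condMI p A B (fun _ => (0 : Fin 1))

/-- `X 0, …, X (n-1)` (the first `n` stream elements) are mutually independent under `p`,
i.e. they are drawn from a product distribution. -/
def IsProduct {Ω : Type} [Fintype Ω] {𝒳 : Type} (p : Ω → ℝ) (n : ℕ) (X : ℕ → Ω → 𝒳) : Prop :=
  ∀ x : ℕ → 𝒳,
    pr p (fun ω => ∀ j < n, X j ω = x j) =
      ∏ j ∈ Finset.range n, pr p (fun ω => X j ω = x j)

/-- A `k`-pass streaming algorithm on the input stream `X 0, …, X (n-1)` (0-indexed;
the paper's `X_j` is `X (j-1)`), over a finite sample space `Ω` with pmf `p`.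
`S` is the finite set of memory states, `Rv` the value space of the per-step private
randomness, `init` the initial memory state `M₀`, `R i j` the private randomness used at
step `j` of pass `i` (0-indexed), and `f i j` the corresponding transition function.
The field `indep` states that the initial state, all the per-step random seeds, and the
input stream are mutually independent. -/
structure Alg (Ω : Type) [Fintype Ω] (p : Ω → ℝ) (𝒳 : Type) [Fintype 𝒳]
    (n k : ℕ) (X : ℕ → Ω → 𝒳) where
  S : Type
  fintS : Fintype S
  Rv : Type
  fintR : Fintype Rv
  init : Ω → S
  R : ℕ → ℕ → Ω → Rv
  f : ℕ → ℕ → 𝒳 → S → Rv → S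
  indep : ∀ (m : S) (r : ℕ → ℕ → Rv) (x : ℕ → 𝒳),
    pr p (fun ω => init ω = m ∧ (∀ i < k, ∀ j < n, R i j ω = r i j) ∧ (∀ j < n, X j ω = x j))
      = pr p (fun ω => init ω = m)
        * (∏ i ∈ Finset.range k, ∏ j ∈ Finset.range n, pr p (fun ω => R i j ω = r i j))
        * pr p (fun ω => ∀ j < n, X j ω = x j)

attribute [instance] Alg.fintS Alg.fintR

variable {Ω : Type} [Fintype Ω] {p : Ω → ℝ} {𝒳 : Type} [Fintype 𝒳] {n k : ℕ} {X : ℕ → Ω → 𝒳}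

/-- Running pass `i` (0-indexed) of the algorithm for `j` steps starting from `ini`. -/
def Alg.runPass (M : Alg Ω p 𝒳 n k X) (i : ℕ) (ini : Ω → M.S) : ℕ → Ω → M.S
  | 0 => ini
  | j + 1 => fun ω =>
      if j < n ∧ i < k then
        M.f i j (X j ω) (M.runPass i ini j ω) (M.R i j ω)
      else M.runPass i ini j ω

/-- `M.passEnd i` is the memory state at the end of pass `i`; `M.passEnd 0 = M₀` is the
initial state, and `M.passEnd i` is the paper's `M_i = M_{(i,n)}`. -/
def Alg.passEnd (M : Alg Ω p 𝒳 n k X) : ℕ → Ω → M.S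
  | 0 => M.init
  | i + 1 => M.runPass i (M.passEnd i) n

/-- `M.st i j` is the memory state after reading `j` elements in pass `i+1`;
it is the paper's `M_{(i+1, j)}`. -/
def Alg.st (M : Alg Ω p 𝒳 n k X) (i j : ℕ) : Ω → M.S :=
  M.runPass i (M.passEnd i) j

/-- The multi-pass information cost
`MIC(M, μ) = Σ_{i=1}^{k} Σ_{j=1}^{n} Σ_{ℓ=1}^{j} I(M_{(i,j)}; X_ℓ | M_{(≤i,ℓ-1)}, M_{(≤i-1,j)})
  + Σ_{i=1}^{k} Σ_{j=1}^{n} Σ_{ℓ=j+1}^{n} I(M_{(i,j)}; X_ℓ | M_{(≤i-1,ℓ-1)}, M_{(≤i-1,j)})`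
(all summation indices below are 0-indexed shifts of the paper's 1-indexed ones). -/
def Alg.MIC (M : Alg Ω p 𝒳 n k X) : ℝ :=
  (∑ i ∈ Finset.range k, ∑ j ∈ Finset.range n, ∑ l ∈ Finset.range (j + 1),
    condMI p (M.st i (j + 1)) (X l)
      (fun ω => ((fun r : Fin (i + 1) => M.st r.1 l ω),
                 (fun r : Fin i => M.st r.1 (j + 1) ω))))
  + (∑ i ∈ Finset.range k, ∑ j ∈ Finset.range n, ∑ l ∈ Finset.Ico (j + 1) n,
    condMI p (M.st i (j + 1)) (X l)
      (fun ω => ((fun r : Fin i => M.st r.1 l ω),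
                 (fun r : Fin i => M.st r.1 (j + 1) ω))))

/-- The conditional information cost
`MIC_cond(M, μ) = Σ_{j=1}^{n} Σ_{ℓ=1}^{j} I(M_{(≤k,j)}; X_ℓ | M_{<k}, M_{(≤k,ℓ-1)})`. -/
def Alg.MICcond (M : Alg Ω p 𝒳 n k X) : ℝ :=
  ∑ j ∈ Finset.range n, ∑ l ∈ Finset.range (j + 1),
    condMI p (fun ω => fun r : Fin k => M.st r.1 (j + 1) ω) (X l)
      (fun ω => ((fun r : Fin k => M.passEnd r.1 ω),
                 (fun r : Fin k => M.st r.1 l ω)))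

end MultiPassIC

namespace MultiPassIC

/- ======================= auxiliary machinery ======================= -/

section Aux

variable {Ω : Type} [Fintype Ω] {p : Ω → ℝ} {𝒳 : Type} [Fintype 𝒳] {n k : ℕ} {X : ℕ → Ω → 𝒳}

lemma pr_nonneg (hp : IsPMF p) (E : Ω → Prop) : 0 ≤ pr p E :=
  Finset.sum_nonneg fun ω _ => by by_cases h : E ω <;> simp [h, hp.nonneg ω]

lemma pr_mono (hp : IsPMF p) {E E' : Ω → Prop} (h : ∀ ω, E ω → E' ω) :
    pr p E ≤ pr p E' := by
  refine Finset.sum_le_sum fun ω _ => ?_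
  by_cases hE : E ω
  · simp [hE, h ω hE]
  · by_cases hE' : E' ω <;> simp [hE, hE', hp.nonneg ω]

lemma pr_congr {E E' : Ω → Prop} (h : ∀ ω, E ω ↔ E' ω) : pr p E = pr p E' := by
  unfold pr
  refine Finset.sum_congr rfl fun ω _ => ?_
  by_cases hE : E ω
  · rw [if_pos hE, if_pos ((h ω).1 hE)]
  · rw [if_neg hE, if_neg (fun h' => hE ((h ω).2 h'))]

lemma pr_true (hp : IsPMF p) : pr p (fun _ => True) = 1 := by
  simpa [pr] using hp.sum_one

lemma pr_const_and (c : Prop) (E : Ω → Prop) :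
    pr p (fun ω => c ∧ E ω) = if c then pr p E else 0 := by
  by_cases h : c
  · rw [if_pos h]; exact pr_congr fun ω => by simp [h]
  · rw [if_neg h]; simp [pr, h]

lemma pr_sum_fiber {T : Type} [Fintype T] (F : Ω → T) (E : Ω → Prop) :
    pr p E = ∑ t, pr p (fun ω => E ω ∧ F ω = t) := by
  unfold pr
  rw [Finset.sum_comm]
  refine Finset.sum_congr rfl fun ω _ => ?_
  by_cases hE : E ω <;> simp [hE]

/-! ### Pure simulators -/

/-- Pure simulation of pass `i` from state `s0` at time `0`. -/
def Alg.sim (M : Alg Ω p 𝒳 n k X) (i : ℕ) (s0 : M.S) (x : ℕ → 𝒳) (rr : ℕ → M.Rv) :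
    ℕ → M.S
  | 0 => s0
  | t + 1 =>
      if t < n ∧ i < k then M.f i t (x t) (M.sim i s0 x rr t) (rr t)
      else M.sim i s0 x rr t

/-- Pure simulation of pass `i` from state `s` at time `t0`; `M.simF i t0 s x rr d` is the
state at time `t0 + d`. -/
def Alg.simF (M : Alg Ω p 𝒳 n k X) (i t0 : ℕ) (s : M.S) (x : ℕ → 𝒳) (rr : ℕ → M.Rv) :
    ℕ → M.S
  | 0 => s
  | d + 1 =>
      if t0 + d < n ∧ i < k then
        M.f i (t0 + d) (x (t0 + d)) (M.simF i t0 s x rr d) (rr (t0 + d))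
      else M.simF i t0 s x rr d

lemma Alg.runPass_eq_sim (M : Alg Ω p 𝒳 n k X) (i : ℕ) (ini : Ω → M.S) (t : ℕ) (ω : Ω) :
    M.runPass i ini t ω = M.sim i (ini ω) (fun l => X l ω) (fun l => M.R i l ω) t := by
  induction t with
  | zero => rfl
  | succ t ih => simp only [Alg.runPass, Alg.sim, ih]

lemma Alg.sim_congr (M : Alg Ω p 𝒳 n k X) {i : ℕ} {s0 : M.S} {x x' : ℕ → 𝒳}
    {rr rr' : ℕ → M.Rv} {t : ℕ}
    (h : ∀ l, l < t → l < n → x l = x' l ∧ rr l = rr' l) :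
    M.sim i s0 x rr t = M.sim i s0 x' rr' t := by
  induction t with
  | zero => rfl
  | succ t ih =>
    have ih' := ih fun l hl hln => h l (by omega) hln
    by_cases hg : t < n ∧ i < k
    · simp only [Alg.sim, if_pos hg, ih', (h t (by omega) hg.1).1, (h t (by omega) hg.1).2]
    · simp only [Alg.sim, if_neg hg, ih']

lemma Alg.sim_add (M : Alg Ω p 𝒳 n k X) (i : ℕ) (s0 : M.S) (x : ℕ → 𝒳) (rr : ℕ → M.Rv)
    (t0 d : ℕ) :
    M.sim i s0 x rr (t0 + d) = M.simF i t0 (M.sim i s0 x rr t0) x rr d := by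
  induction d with
  | zero => rfl
  | succ d ih => simp only [← Nat.add_assoc, Alg.sim, Alg.simF, ih, Nat.add_eq]

lemma Alg.simF_congr (M : Alg Ω p 𝒳 n k X) {i t0 : ℕ} {s : M.S} {x x' : ℕ → 𝒳}
    {rr rr' : ℕ → M.Rv} {d : ℕ}
    (h : ∀ l, t0 ≤ l → l < t0 + d → l < n → x l = x' l ∧ rr l = rr' l) :
    M.simF i t0 s x rr d = M.simF i t0 s x' rr' d := by
  induction d with
  | zero => rfl
  | succ d ih =>
    have ih' := ih fun l h1 h2 hln => h l h1 (by omega) hln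
    by_cases hg : t0 + d < n ∧ i < k
    · simp only [Alg.simF, if_pos hg, ih', (h (t0 + d) (by omega) (by omega) hg.1).1,
        (h (t0 + d) (by omega) (by omega) hg.1).2]
    · simp only [Alg.simF, if_neg hg, ih']

lemma Alg.st_eq_sim (M : Alg Ω p 𝒳 n k X) (i t : ℕ) (ω : Ω) :
    M.st i t ω = M.sim i (M.passEnd i ω) (fun l => X l ω) (fun l => M.R i l ω) t :=
  M.runPass_eq_sim i (M.passEnd i) t ω

lemma Alg.st_add (M : Alg Ω p 𝒳 n k X) (i t0 d : ℕ) (ω : Ω) :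
    M.st i (t0 + d) ω
      = M.simF i t0 (M.st i t0 ω) (fun l => X l ω) (fun l => M.R i l ω) d := by
  rw [Alg.st_eq_sim, Alg.sim_add, ← Alg.st_eq_sim]

lemma Alg.passEnd_succ (M : Alg Ω p 𝒳 n k X) (i : ℕ) (ω : Ω) :
    M.passEnd (i + 1) ω = M.st i n ω := rfl


/-! ### Splitting the sample space into past and future -/

/-- The "past" data: initial state, inputs before time `j`, randomness before time `j`. -/
def F1v (M : Alg Ω p 𝒳 n k X) (j : ℕ) (ω : Ω) :
    M.S × (Fin j → 𝒳) × (Fin k → Fin j → M.Rv) :=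
  (M.init ω, fun l => X l ω, fun i' l => M.R i' l ω)

/-- The "future" data: inputs and randomness from time `j` on. -/
def F2v (M : Alg Ω p 𝒳 n k X) (j : ℕ) (ω : Ω) :
    (Fin (n - j) → 𝒳) × (Fin k → Fin (n - j) → M.Rv) :=
  (fun l => X (j + l) ω, fun i' l => M.R i' (j + l) ω)

def xh1 [Nonempty 𝒳] (j : ℕ) (x1 : Fin j → 𝒳) (l : ℕ) : 𝒳 :=
  if h : l < j then x1 ⟨l, h⟩ else Classical.arbitrary 𝒳

def xh2 [Nonempty 𝒳] (n j : ℕ) (x2 : Fin (n - j) → 𝒳) (l : ℕ) : 𝒳 :=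
  if h : l < n - j then x2 ⟨l, h⟩ else Classical.arbitrary 𝒳

def rh1 (M : Alg Ω p 𝒳 n k X) [Nonempty M.Rv] (j : ℕ) (r1 : Fin k → Fin j → M.Rv)
    (i' l : ℕ) : M.Rv :=
  if h : i' < k ∧ l < j then r1 ⟨i', h.1⟩ ⟨l, h.2⟩ else Classical.arbitrary M.Rv

def rh2 (M : Alg Ω p 𝒳 n k X) [Nonempty M.Rv] (j : ℕ) (r2 : Fin k → Fin (n - j) → M.Rv)
    (i' l : ℕ) : M.Rv :=
  if h : i' < k ∧ l < n - j then r2 ⟨i', h.1⟩ ⟨l, h.2⟩ else Classical.arbitrary M.Rv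

/-- Weight of a past configuration. -/
def Aw (M : Alg Ω p 𝒳 n k X) [Nonempty 𝒳] [Nonempty M.Rv] (j : ℕ)
    (t1 : M.S × (Fin j → 𝒳) × (Fin k → Fin j → M.Rv)) : ℝ :=
  pr p (fun ω => M.init ω = t1.1)
    * (∏ i' ∈ Finset.range k, ∏ l ∈ Finset.range j,
        pr p (fun ω => M.R i' l ω = rh1 M j t1.2.2 i' l))
    * ∏ l ∈ Finset.range j, pr p (fun ω => X l ω = xh1 j t1.2.1 l)

/-- Weight of a future configuration. -/
def Bw (M : Alg Ω p 𝒳 n k X) [Nonempty 𝒳] [Nonempty M.Rv] (j : ℕ)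
    (t2 : (Fin (n - j) → 𝒳) × (Fin k → Fin (n - j) → M.Rv)) : ℝ :=
  (∏ i' ∈ Finset.range k, ∏ l ∈ Finset.range (n - j),
      pr p (fun ω => M.R i' (j + l) ω = rh2 M j t2.2 i' l))
    * ∏ l ∈ Finset.range (n - j), pr p (fun ω => X (j + l) ω = xh2 n j t2.1 l)

lemma prod_range_split (g : ℕ → ℝ) {a b : ℕ} (h : a ≤ b) :
    ∏ l ∈ Finset.range b, g l
      = (∏ l ∈ Finset.range a, g l) * ∏ l ∈ Finset.range (b - a), g (a + l) := by
  rw [← Finset.prod_range_add, Nat.add_sub_cancel' h]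

lemma joint (M : Alg Ω p 𝒳 n k X) [Nonempty 𝒳] [Nonempty M.Rv]
    (hprod : IsProduct p n X) (j : ℕ) (hjn : j ≤ n)
    (t1 : M.S × (Fin j → 𝒳) × (Fin k → Fin j → M.Rv))
    (t2 : (Fin (n - j) → 𝒳) × (Fin k → Fin (n - j) → M.Rv)) :
    pr p (fun ω => F1v M j ω = t1 ∧ F2v M j ω = t2) = Aw M j t1 * Bw M j t2 := by
  classical
  have hev : ∀ ω, (F1v M j ω = t1 ∧ F2v M j ω = t2) ↔
      (M.init ω = t1.1
        ∧ (∀ i' < k, ∀ l < n, M.R i' l ω =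
            (fun i'' l' => if l' < j then rh1 M j t1.2.2 i'' l'
              else rh2 M j t2.2 i'' (l' - j)) i' l)
        ∧ (∀ l < n, X l ω =
            (fun l' => if l' < j then xh1 j t1.2.1 l'
              else xh2 n j t2.1 (l' - j)) l)) := by
    intro ω
    simp only [F1v, F2v, Prod.ext_iff, funext_iff]
    constructor
    · rintro ⟨⟨h1, h2, h3⟩, h4, h5⟩
      refine ⟨h1, ?_, ?_⟩
      · intro i' hi' l hl
        by_cases hlj : l < j
        · simp only [if_pos hlj, rh1]
          rw [dif_pos (⟨hi', hlj⟩ : i' < k ∧ l < j)]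
          exact h3 ⟨i', hi'⟩ ⟨l, hlj⟩
        · obtain ⟨d, rfl⟩ : ∃ d, l = j + d := ⟨l - j, by omega⟩
          have hd : d < n - j := by omega
          simp only [if_neg hlj, rh2, Nat.add_sub_cancel_left]
          rw [dif_pos (⟨hi', hd⟩ : i' < k ∧ d < n - j)]
          exact h5 ⟨i', hi'⟩ ⟨d, hd⟩
      · intro l hl
        by_cases hlj : l < j
        · simp only [if_pos hlj, xh1]
          rw [dif_pos hlj]
          exact h2 ⟨l, hlj⟩
        · obtain ⟨d, rfl⟩ : ∃ d, l = j + d := ⟨l - j, by omega⟩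
          have hd : d < n - j := by omega
          simp only [if_neg hlj, xh2, Nat.add_sub_cancel_left]
          rw [dif_pos hd]
          exact h4 ⟨d, hd⟩
    · rintro ⟨h1, h2, h3⟩
      refine ⟨⟨h1, ?_, ?_⟩, ?_, ?_⟩
      · intro l
        have hl := l.2
        have := h3 l.1 (by omega)
        simp only [if_pos hl, xh1] at this
        rw [dif_pos hl] at this
        simpa using this
      · intro i' l
        have hl := l.2
        have hi' := i'.2
        have := h2 i'.1 hi' l.1 (by omega)
        simp only [if_pos hl, rh1] at this
        rw [dif_pos (⟨hi', hl⟩ : i'.1 < k ∧ l.1 < j)] at this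
        simpa using this
      · intro l
        have hl := l.2
        have := h3 (j + l.1) (by omega)
        simp only [if_neg (show ¬ (j + l.1 < j) by omega), xh2,
          Nat.add_sub_cancel_left] at this
        rw [dif_pos hl] at this
        simpa using this
      · intro i' l
        have hl := l.2
        have hi' := i'.2
        have := h2 i'.1 hi' (j + l.1) (by omega)
        simp only [if_neg (show ¬ (j + l.1 < j) by omega), rh2,
          Nat.add_sub_cancel_left] at this
        rw [dif_pos (⟨hi', hl⟩ : i'.1 < k ∧ l.1 < n - j)] at this
        simpa using this
  rw [pr_congr hev,
    M.indep t1.1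
      (fun i'' l' => if l' < j then rh1 M j t1.2.2 i'' l' else rh2 M j t2.2 i'' (l' - j))
      (fun l' => if l' < j then xh1 j t1.2.1 l' else xh2 n j t2.1 (l' - j)),
    hprod]
  have hX : (∏ l ∈ Finset.range n,
        pr p (fun ω => X l ω = if l < j then xh1 j t1.2.1 l else xh2 n j t2.1 (l - j)))
      = (∏ l ∈ Finset.range j, pr p (fun ω => X l ω = xh1 j t1.2.1 l))
        * ∏ l ∈ Finset.range (n - j), pr p (fun ω => X (j + l) ω = xh2 n j t2.1 l) := by
    rw [prod_range_split _ hjn]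
    congr 1
    · exact Finset.prod_congr rfl fun l hl =>
        pr_congr fun ω => by rw [if_pos (Finset.mem_range.mp hl)]
    · exact Finset.prod_congr rfl fun l hl =>
        pr_congr fun ω => by
          rw [if_neg (show ¬ (j + l < j) by omega), Nat.add_sub_cancel_left]
  have hR : (∏ i' ∈ Finset.range k, ∏ l ∈ Finset.range n,
        pr p (fun ω => M.R i' l ω =
          if l < j then rh1 M j t1.2.2 i' l else rh2 M j t2.2 i' (l - j)))
      = (∏ i' ∈ Finset.range k, ∏ l ∈ Finset.range j,
          pr p (fun ω => M.R i' l ω = rh1 M j t1.2.2 i' l))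
        * ∏ i' ∈ Finset.range k, ∏ l ∈ Finset.range (n - j),
            pr p (fun ω => M.R i' (j + l) ω = rh2 M j t2.2 i' l) := by
    rw [← Finset.prod_mul_distrib]
    refine Finset.prod_congr rfl fun i' _ => ?_
    rw [prod_range_split _ hjn]
    congr 1
    · exact Finset.prod_congr rfl fun l hl =>
        pr_congr fun ω => by rw [if_pos (Finset.mem_range.mp hl)]
    · exact Finset.prod_congr rfl fun l hl =>
        pr_congr fun ω => by
          rw [if_neg (show ¬ (j + l < j) by omega), Nat.add_sub_cancel_left]
  rw [hX, hR]
  simp only [Aw, Bw]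
  ring



lemma split_sum (M : Alg Ω p 𝒳 n k X) [Nonempty 𝒳] [Nonempty M.Rv]
    (hprod : IsProduct p n X) (j : ℕ) (hjn : j ≤ n)
    (Q1 : M.S × (Fin j → 𝒳) × (Fin k → Fin j → M.Rv) → Prop)
    (Q2 : (Fin (n - j) → 𝒳) × (Fin k → Fin (n - j) → M.Rv) → Prop) :
    pr p (fun ω => Q1 (F1v M j ω) ∧ Q2 (F2v M j ω))
      = (∑ t1, if Q1 t1 then Aw M j t1 else 0)
        * (∑ t2, if Q2 t2 then Bw M j t2 else 0) := by
  classical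
  rw [pr_sum_fiber (fun ω => (F1v M j ω, F2v M j ω))
    (fun ω => Q1 (F1v M j ω) ∧ Q2 (F2v M j ω))]
  rw [Fintype.sum_prod_type, Finset.sum_mul_sum]
  refine Finset.sum_congr rfl fun t1 _ => Finset.sum_congr rfl fun t2 _ => ?_
  have hiff : ∀ ω : Ω, ((Q1 (F1v M j ω) ∧ Q2 (F2v M j ω)) ∧ (F1v M j ω, F2v M j ω) = (t1, t2))
      ↔ ((Q1 t1 ∧ Q2 t2) ∧ (F1v M j ω = t1 ∧ F2v M j ω = t2)) := by
    intro ω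
    constructor
    · rintro ⟨⟨hq1, hq2⟩, hpair⟩
      have h1 : F1v M j ω = t1 := congrArg Prod.fst hpair
      have h2 : F2v M j ω = t2 := congrArg Prod.snd hpair
      exact ⟨⟨h1 ▸ hq1, h2 ▸ hq2⟩, h1, h2⟩
    · rintro ⟨⟨hq1, hq2⟩, h1, h2⟩
      exact ⟨⟨h1.symm ▸ hq1, h2.symm ▸ hq2⟩, by rw [h1, h2]⟩
  rw [pr_congr hiff, pr_const_and, joint M hprod j hjn t1 t2]
  by_cases h1 : Q1 t1 <;> by_cases h2 : Q2 t2 <;> simp [h1, h2]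

lemma split_pr (M : Alg Ω p 𝒳 n k X) [Nonempty 𝒳] [Nonempty M.Rv]
    (hp : IsPMF p) (hprod : IsProduct p n X) (j : ℕ) (hjn : j ≤ n)
    (Q1 : M.S × (Fin j → 𝒳) × (Fin k → Fin j → M.Rv) → Prop)
    (Q2 : (Fin (n - j) → 𝒳) × (Fin k → Fin (n - j) → M.Rv) → Prop) :
    pr p (fun ω => Q1 (F1v M j ω) ∧ Q2 (F2v M j ω))
      = pr p (fun ω => Q1 (F1v M j ω)) * pr p (fun ω => Q2 (F2v M j ω)) := by
  classical
  have h11 := split_sum M hprod j hjn Q1 Q2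
  have h10 := split_sum M hprod j hjn Q1 (fun _ => True)
  have h01 := split_sum M hprod j hjn (fun _ => True) Q2
  have h00 := split_sum M hprod j hjn (fun _ => True) (fun _ => True)
  simp only [if_true] at h10 h01 h00
  have e10 : pr p (fun ω => Q1 (F1v M j ω)) = pr p (fun ω => Q1 (F1v M j ω) ∧ True) :=
    pr_congr fun ω => by simp
  have e01 : pr p (fun ω => Q2 (F2v M j ω)) = pr p (fun ω => True ∧ Q2 (F2v M j ω)) :=
    pr_congr fun ω => by simp
  have e00 : pr p (fun ω : Ω => (True ∧ True : Prop)) = 1 :=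
    (pr_congr fun ω => by simp).trans (pr_true hp)
  rw [h11, e10, h10, e01, h01]
  have h1 : (∑ t1, Aw M j t1) * (∑ t2, Bw M j t2) = 1 := by rw [← h00, ← e00]
  linear_combination
    (-((∑ t1, if Q1 t1 then Aw M j t1 else 0) * ∑ t2, if Q2 t2 then Bw M j t2 else 0)) * h1

/-! ### From processes to pure simulations -/

lemma st_past (M : Alg Ω p 𝒳 n k X) [Nonempty 𝒳] [Nonempty M.Rv] {j : ℕ} (hjn : j ≤ n)
    {i' : ℕ} (hi'k : i' < k) (ω : Ω) {t : ℕ} (ht : t ≤ j) :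
    M.st i' t ω
      = M.sim i' (M.passEnd i' ω) (xh1 j (F1v M j ω).2.1)
          (rh1 M j (F1v M j ω).2.2 i') t := by
  rw [Alg.st_eq_sim]
  refine M.sim_congr fun l hlt hln => ?_
  have hlj : l < j := by omega
  constructor
  · show X l ω = xh1 j _ l
    simp only [xh1]
    rw [dif_pos hlj]
    rfl
  · show M.R i' l ω = rh1 M j _ i' l
    simp only [rh1]
    rw [dif_pos (⟨hi'k, hlj⟩ : i' < k ∧ l < j)]
    rfl

lemma st_future (M : Alg Ω p 𝒳 n k X) [Nonempty 𝒳] [Nonempty M.Rv] {j : ℕ} (hjn : j ≤ n)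
    {i' : ℕ} (hi'k : i' < k) (ω : Ω) (d : ℕ) :
    M.st i' (j + d) ω
      = M.simF i' j (M.st i' j ω) (fun l => xh2 n j (F2v M j ω).1 (l - j))
          (fun l => rh2 M j (F2v M j ω).2 i' (l - j)) d := by
  rw [Alg.st_add]
  refine M.simF_congr fun l h1 h2 hln => ?_
  have hl : l - j < n - j := by omega
  constructor
  · show X l ω = xh2 n j _ (l - j)
    simp only [xh2]
    rw [dif_pos hl]
    show X l ω = X (j + (l - j)) ω
    congr 1
    omega
  · show M.R i' l ω = rh2 M j _ i' (l - j)
    simp only [rh2]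
    rw [dif_pos (⟨hi'k, hl⟩ : i' < k ∧ l - j < n - j)]
    show M.R i' l ω = M.R i' (j + (l - j)) ω
    congr 1
    omega

/-! ### The pure predicates describing the events -/

/-- Past part of the event `C = c`. -/
def Hpred (M : Alg Ω p 𝒳 n k X) [Nonempty 𝒳] [Nonempty M.Rv] (i j : ℕ) (hi0 : 0 < i)
    (e s : Fin i → M.S) (t1 : M.S × (Fin j → 𝒳) × (Fin k → Fin j → M.Rv)) : Prop :=
  t1.1 = e ⟨0, hi0⟩ ∧
    ∀ i' : Fin i, M.sim i' (e i') (xh1 j t1.2.1) (rh1 M j t1.2.2 i') j = s i'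

/-- Future part of the event `C = c`. -/
def Gpred (M : Alg Ω p 𝒳 n k X) [Nonempty 𝒳] [Nonempty M.Rv] (i j : ℕ)
    (e s : Fin i → M.S) (t2 : (Fin (n - j) → 𝒳) × (Fin k → Fin (n - j) → M.Rv)) : Prop :=
  ∀ (i' : Fin i) (h : i'.1 + 1 < i),
    M.simF i' j (s i') (fun l => xh2 n j t2.1 (l - j))
      (fun l => rh2 M j t2.2 i' (l - j)) (n - j) = e ⟨i'.1 + 1, h⟩

lemma claimC (M : Alg Ω p 𝒳 n k X) [Nonempty 𝒳] [Nonempty M.Rv] {i j : ℕ}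
    (hjn : j ≤ n) (hik : i ≤ k) (hi0 : 0 < i) (e s : Fin i → M.S) (ω : Ω) :
    ((∀ r : Fin i, M.passEnd r.1 ω = e r) ∧ (∀ r : Fin i, M.st r.1 j ω = s r))
      ↔ Hpred M i j hi0 e s (F1v M j ω) ∧ Gpred M i j e s (F2v M j ω) := by
  constructor
  · rintro ⟨hE, hS⟩
    refine ⟨⟨?_, ?_⟩, ?_⟩
    · exact hE ⟨0, hi0⟩
    · intro r
      have h := st_past M hjn (lt_of_lt_of_le r.2 hik) ω (le_refl j)
      rw [hE r] at h
      rw [← h]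
      exact hS r
    · intro r hr
      have h := st_future M hjn (lt_of_lt_of_le r.2 hik) ω (n - j)
      rw [show j + (n - j) = n from by omega] at h
      rw [hS r] at h
      have h2 : M.passEnd (r.1 + 1) ω = e ⟨r.1 + 1, hr⟩ := hE ⟨r.1 + 1, hr⟩
      rw [M.passEnd_succ, h] at h2
      exact h2
  · rintro ⟨⟨h0, hH⟩, hG⟩
    have key : ∀ r', ∀ hr : r' < i, M.passEnd r' ω = e ⟨r', hr⟩ ∧ M.st r' j ω = s ⟨r', hr⟩ := by
      intro r'
      induction r' with
      | zero =>
        intro hr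
        refine ⟨h0, ?_⟩
        have h := st_past M hjn (lt_of_lt_of_le hr hik) ω (le_refl j)
        rw [show M.passEnd 0 ω = e ⟨0, hr⟩ from h0] at h
        rw [h]
        exact hH ⟨0, hr⟩
      | succ r ih =>
        intro hr
        have hr' : r < i := by omega
        obtain ⟨hpe, hst⟩ := ih hr'
        have hpe' : M.passEnd (r + 1) ω = e ⟨r + 1, hr⟩ := by
          rw [M.passEnd_succ]
          have h := st_future M hjn (lt_of_lt_of_le hr' hik) ω (n - j)
          rw [show j + (n - j) = n from by omega, hst] at h
          rw [h]
          exact hG ⟨r, hr'⟩ hr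
        refine ⟨hpe', ?_⟩
        have h := st_past M hjn (lt_of_lt_of_le hr hik) ω (le_refl j)
        rw [show M.passEnd (r + 1) ω = e ⟨r + 1, hr⟩ from hpe'] at h
        rw [h]
        exact hH ⟨r + 1, hr⟩
    exact ⟨fun r => by simpa using (key r.1 r.2).1, fun r => by simpa using (key r.1 r.2).2⟩

lemma claimA (M : Alg Ω p 𝒳 n k X) [Nonempty 𝒳] [Nonempty M.Rv] {i j : ℕ}
    (hjn : j ≤ n) (hik : i ≤ k) (ω : Ω) (e : Fin i → M.S)
    (hE : ∀ r : Fin i, M.passEnd r.1 ω = e r)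
    (a : (Fin j → 𝒳) × (Fin i → Fin j → M.S)) :
    (((fun r : Fin j => X r.1 ω), (fun (i' : Fin i) (r : Fin j) => M.st i'.1 r.1 ω)) = a)
      ↔ ((F1v M j ω).2.1 = a.1 ∧
          ∀ (i' : Fin i) (l : Fin j),
            M.sim i' (e i') (xh1 j (F1v M j ω).2.1)
              (rh1 M j (F1v M j ω).2.2 i') l = a.2 i' l) := by
  rw [Prod.ext_iff]
  constructor
  · rintro ⟨h1, h2⟩
    refine ⟨h1, fun i' l => ?_⟩
    have h := st_past M hjn (lt_of_lt_of_le i'.2 hik) ω (le_of_lt l.2)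
    rw [hE i'] at h
    rw [← h]
    exact congrFun (congrFun h2 i') l
  · rintro ⟨h1, h2⟩
    refine ⟨h1, ?_⟩
    funext i' l
    have h := st_past M hjn (lt_of_lt_of_le i'.2 hik) ω (le_of_lt l.2)
    rw [hE i'] at h
    show M.st i'.1 l.1 ω = a.2 i' l
    rw [h]
    exact h2 i' l

lemma claimB (M : Alg Ω p 𝒳 n k X) [Nonempty 𝒳] [Nonempty M.Rv] {i j : ℕ}
    (hjn : j ≤ n) (hik : i ≤ k) (ω : Ω) (s : Fin i → M.S)
    (hS : ∀ r : Fin i, M.st r.1 j ω = s r)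
    (b : (Fin (n - j) → 𝒳) × (Fin i → Fin (n - j) → M.S)) :
    (((fun r : Fin (n - j) => X (j + r.1) ω),
      (fun (i' : Fin i) (r : Fin (n - j)) => M.st i'.1 (j + 1 + r.1) ω)) = b)
      ↔ ((F2v M j ω).1 = b.1 ∧
          ∀ (i' : Fin i) (l : Fin (n - j)),
            M.simF i' j (s i') (fun l' => xh2 n j (F2v M j ω).1 (l' - j))
              (fun l' => rh2 M j (F2v M j ω).2 i' (l' - j)) (l.1 + 1) = b.2 i' l) := by
  rw [Prod.ext_iff]
  constructor
  · rintro ⟨h1, h2⟩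
    refine ⟨h1, fun i' l => ?_⟩
    have h := st_future M hjn (lt_of_lt_of_le i'.2 hik) ω (l.1 + 1)
    rw [hS i', show j + (l.1 + 1) = j + 1 + l.1 from by omega] at h
    rw [← h]
    exact congrFun (congrFun h2 i') l
  · rintro ⟨h1, h2⟩
    refine ⟨h1, ?_⟩
    funext i' l
    have h := st_future M hjn (lt_of_lt_of_le i'.2 hik) ω (l.1 + 1)
    rw [hS i', show j + (l.1 + 1) = j + 1 + l.1 from by omega] at h
    show M.st i'.1 (j + 1 + l.1) ω = b.2 i' l
    rw [h]
    exact h2 i' l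

end Aux


/-- Corollary `indep1`: for a `k`-pass streaming algorithm on a product
distribution, for all `j ∈ [n]` and `i ∈ [k]`:
`I(X_{[1,j]}, M_{(≤i,[0,j-1])}; X_{[j+1,n]}, M_{(≤i,[j+1,n])} | M_{<i}, M_{(≤i,j)}) = 0`.
(0-shifted indices: the paper's `X_ℓ` is `X (ℓ-1)`, `M_{(r,q)}` is `M.st (r-1) q`,
and `M_r` is `M.passEnd r`.) -/
theorem indep_past_future_states
    {Ω : Type} [Fintype Ω] {p : Ω → ℝ} {𝒳 : Type} [Fintype 𝒳] {n k : ℕ}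
    {X : ℕ → Ω → 𝒳}
    (hp : IsPMF p) (hprod : IsProduct p n X)
    (M : Alg Ω p 𝒳 n k X) :
    ∀ j : ℕ, 1 ≤ j → j ≤ n → ∀ i : ℕ, 1 ≤ i → i ≤ k →
      condMI p
        (fun ω => ((fun r : Fin j => X r.1 ω),
                   (fun (i' : Fin i) (r : Fin j) => M.st i'.1 r.1 ω)))
        (fun ω => ((fun r : Fin (n - j) => X (j + r.1) ω),
                   (fun (i' : Fin i) (r : Fin (n - j)) => M.st i'.1 (j + 1 + r.1) ω)))
        (fun ω => ((fun r : Fin i => M.passEnd r.1 ω),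
                   (fun r : Fin i => M.st r.1 j ω))) = 0 := by
  intro j hj1 hjn i hi1 hik
  have hΩ : Nonempty Ω := by
    by_contra hne
    rw [not_nonempty_iff] at hne
    have h1 := hp.sum_one
    rw [Finset.univ_eq_empty, Finset.sum_empty] at h1
    exact zero_ne_one h1
  obtain ⟨ω0⟩ := hΩ
  haveI : Nonempty 𝒳 := ⟨X 0 ω0⟩
  haveI : Nonempty M.Rv := ⟨M.R 0 0 ω0⟩
  have hi0 : 0 < i := hi1
  simp only [condMI]
  refine Finset.sum_eq_zero fun a _ => Finset.sum_eq_zero fun b _ =>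
    Finset.sum_eq_zero fun c _ => ?_
  -- the event `C = c` in decomposed form
  have hCdec : ∀ ω : Ω,
      (((fun r : Fin i => M.passEnd r.1 ω), (fun r : Fin i => M.st r.1 j ω)) = c)
        ↔ ((∀ r : Fin i, M.passEnd r.1 ω = c.1 r) ∧ (∀ r : Fin i, M.st r.1 j ω = c.2 r)) := by
    intro ω
    constructor
    · intro h
      exact ⟨fun r => congrFun (congrArg Prod.fst h) r,
             fun r => congrFun (congrArg Prod.snd h) r⟩
    · rintro ⟨h1, h2⟩
      exact Prod.ext_iff.mpr ⟨funext h1, funext h2⟩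
  have hC : ∀ ω : Ω,
      (((fun r : Fin i => M.passEnd r.1 ω), (fun r : Fin i => M.st r.1 j ω)) = c)
        ↔ (Hpred M i j hi0 c.1 c.2 (F1v M j ω) ∧ Gpred M i j c.1 c.2 (F2v M j ω)) :=
    fun ω => (hCdec ω).trans (claimC M hjn hik hi0 c.1 c.2 ω)
  -- the four probabilities
  have hCeq : pr p (fun ω =>
        ((fun r : Fin i => M.passEnd r.1 ω), (fun r : Fin i => M.st r.1 j ω)) = c)
      = pr p (fun ω => Hpred M i j hi0 c.1 c.2 (F1v M j ω))
        * pr p (fun ω => Gpred M i j c.1 c.2 (F2v M j ω)) := by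
    rw [pr_congr hC]
    exact split_pr M hp hprod j hjn (fun t1 => Hpred M i j hi0 c.1 c.2 t1) (fun t2 => Gpred M i j c.1 c.2 t2)
  have hACiff : ∀ ω : Ω,
      ((((fun r : Fin j => X r.1 ω), (fun (i' : Fin i) (r : Fin j) => M.st i'.1 r.1 ω)) = a)
        ∧ ((fun r : Fin i => M.passEnd r.1 ω), (fun r : Fin i => M.st r.1 j ω)) = c)
      ↔ ((Hpred M i j hi0 c.1 c.2 (F1v M j ω)
            ∧ (F1v M j ω).2.1 = a.1
            ∧ ∀ (i' : Fin i) (l : Fin j),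
                M.sim i' (c.1 i') (xh1 j (F1v M j ω).2.1)
                  (rh1 M j (F1v M j ω).2.2 i') l = a.2 i' l)
          ∧ Gpred M i j c.1 c.2 (F2v M j ω)) := by
    intro ω
    constructor
    · rintro ⟨hA, hCc⟩
      obtain ⟨hH, hG⟩ := (hC ω).1 hCc
      have hE := ((hCdec ω).1 hCc).1
      obtain ⟨ha1, ha2⟩ := (claimA M hjn hik ω c.1 hE a).1 hA
      exact ⟨⟨hH, ha1, ha2⟩, hG⟩
    · rintro ⟨⟨hH, ha1, ha2⟩, hG⟩
      have hCc := (hC ω).2 ⟨hH, hG⟩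
      have hE := ((hCdec ω).1 hCc).1
      exact ⟨(claimA M hjn hik ω c.1 hE a).2 ⟨ha1, ha2⟩, hCc⟩
  have hBCiff : ∀ ω : Ω,
      ((((fun r : Fin (n - j) => X (j + r.1) ω),
          (fun (i' : Fin i) (r : Fin (n - j)) => M.st i'.1 (j + 1 + r.1) ω)) = b)
        ∧ ((fun r : Fin i => M.passEnd r.1 ω), (fun r : Fin i => M.st r.1 j ω)) = c)
      ↔ (Hpred M i j hi0 c.1 c.2 (F1v M j ω)
          ∧ ((F2v M j ω).1 = b.1
              ∧ (∀ (i' : Fin i) (l : Fin (n - j)),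
                  M.simF i' j (c.2 i') (fun l' => xh2 n j (F2v M j ω).1 (l' - j))
                    (fun l' => rh2 M j (F2v M j ω).2 i' (l' - j)) (l.1 + 1) = b.2 i' l)
              ∧ Gpred M i j c.1 c.2 (F2v M j ω))) := by
    intro ω
    constructor
    · rintro ⟨hB, hCc⟩
      obtain ⟨hH, hG⟩ := (hC ω).1 hCc
      have hS := ((hCdec ω).1 hCc).2
      obtain ⟨hb1, hb2⟩ := (claimB M hjn hik ω c.2 hS b).1 hB
      exact ⟨hH, hb1, hb2, hG⟩
    · rintro ⟨hH, hb1, hb2, hG⟩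
      have hCc := (hC ω).2 ⟨hH, hG⟩
      have hS := ((hCdec ω).1 hCc).2
      exact ⟨(claimB M hjn hik ω c.2 hS b).2 ⟨hb1, hb2⟩, hCc⟩
  have hABCiff : ∀ ω : Ω,
      ((((fun r : Fin j => X r.1 ω), (fun (i' : Fin i) (r : Fin j) => M.st i'.1 r.1 ω)) = a)
        ∧ (((fun r : Fin (n - j) => X (j + r.1) ω),
            (fun (i' : Fin i) (r : Fin (n - j)) => M.st i'.1 (j + 1 + r.1) ω)) = b)
        ∧ ((fun r : Fin i => M.passEnd r.1 ω), (fun r : Fin i => M.st r.1 j ω)) = c)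
      ↔ ((Hpred M i j hi0 c.1 c.2 (F1v M j ω)
            ∧ (F1v M j ω).2.1 = a.1
            ∧ ∀ (i' : Fin i) (l : Fin j),
                M.sim i' (c.1 i') (xh1 j (F1v M j ω).2.1)
                  (rh1 M j (F1v M j ω).2.2 i') l = a.2 i' l)
          ∧ ((F2v M j ω).1 = b.1
              ∧ (∀ (i' : Fin i) (l : Fin (n - j)),
                  M.simF i' j (c.2 i') (fun l' => xh2 n j (F2v M j ω).1 (l' - j))
                    (fun l' => rh2 M j (F2v M j ω).2 i' (l' - j)) (l.1 + 1) = b.2 i' l)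
              ∧ Gpred M i j c.1 c.2 (F2v M j ω))) := by
    intro ω
    constructor
    · rintro ⟨hA, hB, hCc⟩
      obtain ⟨h1, h2⟩ := (hACiff ω).1 ⟨hA, hCc⟩
      obtain ⟨h3, h4⟩ := (hBCiff ω).1 ⟨hB, hCc⟩
      exact ⟨h1, h4⟩
    · rintro ⟨⟨hH, ha1, ha2⟩, hb1, hb2, hG⟩
      have hCc := (hC ω).2 ⟨hH, hG⟩
      obtain ⟨hA, _⟩ := (hACiff ω).2 ⟨⟨hH, ha1, ha2⟩, hG⟩
      obtain ⟨hB, _⟩ := (hBCiff ω).2 ⟨hH, hb1, hb2, hG⟩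
      exact ⟨hA, hB, hCc⟩
  have hACeq : pr p (fun ω => (((fun r : Fin j => X r.1 ω), (fun (i' : Fin i) (r : Fin j) => M.st i'.1 r.1 ω)) = a) ∧ (((fun r : Fin i => M.passEnd r.1 ω), (fun r : Fin i => M.st r.1 j ω)) = c))
      = (pr p (fun ω => Hpred M i j hi0 c.1 c.2 (F1v M j ω)
      ∧ (F1v M j ω).2.1 = a.1
      ∧ ∀ (i' : Fin i) (l : Fin j),
          M.sim i' (c.1 i') (xh1 j (F1v M j ω).2.1)
            (rh1 M j (F1v M j ω).2.2 i') l = a.2 i' l)) * (pr p (fun ω => Gpred M i j c.1 c.2 (F2v M j ω))) :=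
    (pr_congr hACiff).trans (split_pr M hp hprod j hjn (fun t1 => Hpred M i j hi0 c.1 c.2 t1 ∧ t1.2.1 = a.1
      ∧ ∀ (i' : Fin i) (l : Fin j),
          M.sim i' (c.1 i') (xh1 j t1.2.1) (rh1 M j t1.2.2 i') l = a.2 i' l) (fun t2 => Gpred M i j c.1 c.2 t2))
  have hBCeq : pr p (fun ω => (((fun r : Fin (n - j) => X (j + r.1) ω),
          (fun (i' : Fin i) (r : Fin (n - j)) => M.st i'.1 (j + 1 + r.1) ω)) = b) ∧ (((fun r : Fin i => M.passEnd r.1 ω), (fun r : Fin i => M.st r.1 j ω)) = c))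
      = (pr p (fun ω => Hpred M i j hi0 c.1 c.2 (F1v M j ω))) * (pr p (fun ω => (F2v M j ω).1 = b.1
      ∧ (∀ (i' : Fin i) (l : Fin (n - j)),
          M.simF i' j (c.2 i') (fun l' => xh2 n j (F2v M j ω).1 (l' - j))
            (fun l' => rh2 M j (F2v M j ω).2 i' (l' - j)) (l.1 + 1) = b.2 i' l)
      ∧ Gpred M i j c.1 c.2 (F2v M j ω))) :=
    (pr_congr hBCiff).trans (split_pr M hp hprod j hjn (fun t1 => Hpred M i j hi0 c.1 c.2 t1) (fun t2 => t2.1 = b.1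
      ∧ (∀ (i' : Fin i) (l : Fin (n - j)),
          M.simF i' j (c.2 i') (fun l' => xh2 n j t2.1 (l' - j))
            (fun l' => rh2 M j t2.2 i' (l' - j)) (l.1 + 1) = b.2 i' l)
      ∧ Gpred M i j c.1 c.2 t2))
  have hABCeq : pr p (fun ω => (((fun r : Fin j => X r.1 ω), (fun (i' : Fin i) (r : Fin j) => M.st i'.1 r.1 ω)) = a) ∧ (((fun r : Fin (n - j) => X (j + r.1) ω),
          (fun (i' : Fin i) (r : Fin (n - j)) => M.st i'.1 (j + 1 + r.1) ω)) = b) ∧ (((fun r : Fin i => M.passEnd r.1 ω), (fun r : Fin i => M.st r.1 j ω)) = c))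
      = (pr p (fun ω => Hpred M i j hi0 c.1 c.2 (F1v M j ω)
      ∧ (F1v M j ω).2.1 = a.1
      ∧ ∀ (i' : Fin i) (l : Fin j),
          M.sim i' (c.1 i') (xh1 j (F1v M j ω).2.1)
            (rh1 M j (F1v M j ω).2.2 i') l = a.2 i' l)) * (pr p (fun ω => (F2v M j ω).1 = b.1
      ∧ (∀ (i' : Fin i) (l : Fin (n - j)),
          M.simF i' j (c.2 i') (fun l' => xh2 n j (F2v M j ω).1 (l' - j))
            (fun l' => rh2 M j (F2v M j ω).2 i' (l' - j)) (l.1 + 1) = b.2 i' l)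
      ∧ Gpred M i j c.1 c.2 (F2v M j ω))) :=
    (pr_congr hABCiff).trans (split_pr M hp hprod j hjn (fun t1 => Hpred M i j hi0 c.1 c.2 t1 ∧ t1.2.1 = a.1
      ∧ ∀ (i' : Fin i) (l : Fin j),
          M.sim i' (c.1 i') (xh1 j t1.2.1) (rh1 M j t1.2.2 i') l = a.2 i' l) (fun t2 => t2.1 = b.1
      ∧ (∀ (i' : Fin i) (l : Fin (n - j)),
          M.simF i' j (c.2 i') (fun l' => xh2 n j t2.1 (l' - j))
            (fun l' => rh2 M j t2.2 i' (l' - j)) (l.1 + 1) = b.2 i' l)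
      ∧ Gpred M i j c.1 c.2 t2))
  rw [hABCeq, hACeq, hBCeq, hCeq]
  set P1 := pr p (fun ω => Hpred M i j hi0 c.1 c.2 (F1v M j ω)
      ∧ (F1v M j ω).2.1 = a.1
      ∧ ∀ (i' : Fin i) (l : Fin j),
          M.sim i' (c.1 i') (xh1 j (F1v M j ω).2.1)
            (rh1 M j (F1v M j ω).2.2 i') l = a.2 i' l) with hP1
  set F2 := pr p (fun ω => (F2v M j ω).1 = b.1
      ∧ (∀ (i' : Fin i) (l : Fin (n - j)),
          M.simF i' j (c.2 i') (fun l' => xh2 n j (F2v M j ω).1 (l' - j))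
            (fun l' => rh2 M j (F2v M j ω).2 i' (l' - j)) (l.1 + 1) = b.2 i' l)
      ∧ Gpred M i j c.1 c.2 (F2v M j ω)) with hF2
  set H1 := pr p (fun ω => Hpred M i j hi0 c.1 c.2 (F1v M j ω)) with hH1
  set G2 := pr p (fun ω => Gpred M i j c.1 c.2 (F2v M j ω)) with hG2
  rcases eq_or_ne (P1 * F2) 0 with h | h
  · rw [h, zero_mul]
  · have hnn : 0 ≤ P1 * F2 := by
      rw [← hABCeq]
      exact pr_nonneg hp _
    have hpos : 0 < P1 * F2 := lt_of_le_of_ne hnn (Ne.symm h)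
    have hCge : P1 * F2 ≤ H1 * G2 := by
      rw [← hABCeq, ← hCeq]
      exact pr_mono hp fun ω hw => hw.2.2
    have hCpos : 0 < H1 * G2 := lt_of_lt_of_le hpos hCge
    have hden : P1 * G2 * (H1 * F2) = H1 * G2 * (P1 * F2) := by ring
    rw [hden, div_self (ne_of_gt (mul_pos hCpos hpos)), Real.logb_one, mul_zero]


end MultiPassIC
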